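/- Let u ∈ C¹(ℝ) be 2π-periodic with amplitude V = max u − min u, let v = u', and let x₀ be a point of maximum of v. Then Λv(x₀) ≥ max(v(x₀) − πV, 0). -/

import Mathlib

open Real Set Filter Topology MeasureTheory

set_option maxHeartbeats 1000000

lemma aux_integral_helper (u : ℝ → ℝ) (hu : ContDiff ℝ 2 u) (x₀ M D a b : ℝ) (hab : a ≤ b) :
    ∫ y in Icc a b, (M - deriv u (x₀ + y)) / D
      = ((b - a) * M - (u (x₀ + b) - u (x₀ + a))) / D := by
  have hd : Continuous (deriv u) := hu.continuous_deriv one_le_two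
  have hc : Continuous fun x : ℝ => deriv u (x₀ + x) := hd.comp (continuous_const.add continuous_id)
  rw [MeasureTheory.integral_Icc_eq_integral_Ioc, ← intervalIntegral.integral_of_le hab]
  have h1 : (∫ y in a..b, deriv u (x₀ + y)) = u (x₀ + b) - u (x₀ + a) := by
    rw [intervalIntegral.integral_comp_add_left (deriv u) x₀]
    exact intervalIntegral.integral_deriv_eq_sub
      (fun x _ => (hu.differentiable two_ne_zero).differentiableAt)
      (hd.intervalIntegrable _ _)
  rw [intervalIntegral.integral_div,
    intervalIntegral.integral_sub intervalIntegrable_const (hc.intervalIntegrable _ _), h1,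
    intervalIntegral.integral_const]
  simp only [smul_eq_mul]

lemma aux_int_Ici {w : ℝ → ℝ} (hw : Continuous w) {B : ℝ} (hB : ∀ y, |w y| ≤ B)
    {ε : ℝ} (hε : 0 < ε) : IntegrableOn (fun y => w y / y ^ 2) (Ici ε) := by
  rw [integrableOn_Ici_iff_integrableOn_Ioi]
  apply Integrable.mono' (((integrableOn_Ioi_rpow_of_lt (by norm_num : (-2:ℝ) < -1) hε)).const_mul B)
  · exact (hw.measurable.div ((measurable_id.pow_const 2))).aestronglyMeasurable
  · filter_upwards [ae_restrict_mem measurableSet_Ioi] with y hy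
    have hy0 : 0 < y := lt_trans hε hy
    have h2 : y ^ (-2 : ℝ) = (y ^ 2)⁻¹ := by
      rw [rpow_neg hy0.le, ← rpow_natCast y 2]; norm_num
    rw [Real.norm_eq_abs, abs_div, abs_of_nonneg (sq_nonneg y), h2, ← div_eq_mul_inv]
    have : (0:ℝ) < y ^ 2 := by positivity
    gcongr
    exact hB y

/-- Enhanced nonlinear maximum principle, part 2: if `u` is `2π`-periodic with
amplitude `V = max u − min u`, `v = u'`, and `x₀` is a maximum point of `v`,
then `Λv(x₀) ≥ max(v(x₀) − πV, 0)`. -/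
theorem enhanced_max_principle_linear (u : ℝ → ℝ) (Mx mn V x₀ L : ℝ)
    (hu : ContDiff ℝ 2 u) (hper : Function.Periodic u (2*π))
    (hMx : IsGreatest (Set.range u) Mx) (hmn : IsLeast (Set.range u) mn)
    (hV : V = Mx - mn)
    (hmax : ∀ x : ℝ, deriv u x ≤ deriv u x₀)
    (hL : Filter.Tendsto (fun ε : ℝ =>
        (1/π) * ∫ y in {y : ℝ | ε ≤ |y|}, (deriv u x₀ - deriv u (x₀ + y)) / y^2)
        (𝓝[>] 0) (𝓝 L)) :
    L ≥ max (deriv u x₀ - π*V) 0 := by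
  have hπ : (0:ℝ) < π := Real.pi_pos
  set v : ℝ → ℝ := deriv u with hv
  set M : ℝ := deriv u x₀ with hM
  have hvc : Continuous v := hu.continuous_deriv one_le_two
  -- periodicity of v
  have hvper : Function.Periodic v (2*π) := by
    intro x
    have h1 : (fun y => u (y + 2*π)) = u := funext hper
    calc v (x + 2*π) = deriv (fun y => u (y + 2*π)) x := (deriv_comp_add_const u (2*π) x).symm
      _ = v x := by rw [h1]
  -- bound on v
  obtain ⟨C, hC⟩ := (isCompact_Icc (a := (0:ℝ)) (b := 2*π)).exists_bound_of_continuousOn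
    hvc.continuousOn
  have hCb : ∀ x, |v x| ≤ C := by
    intro x
    obtain ⟨y, hy, hxy⟩ := hvper.exists_mem_Ico₀ Real.two_pi_pos x
    rw [hxy]
    exact (Real.norm_eq_abs _ ▸ hC y (Ico_subset_Icc_self hy))
  -- the integrand
  set g : ℝ → ℝ := fun y => (M - v (x₀ + y)) / y ^ 2 with hg
  have hg_nonneg : ∀ y, 0 ≤ g y := fun y =>
    div_nonneg (sub_nonneg.2 (hmax (x₀ + y))) (sq_nonneg y)
  have hB : ∀ y, |M - v (x₀ + y)| ≤ 2*C := by
    intro y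
    calc |M - v (x₀ + y)| ≤ |M| + |v (x₀ + y)| := abs_sub _ _
      _ ≤ C + C := add_le_add (hCb x₀) (hCb _)
      _ = 2*C := by ring
  -- integrability on {ε ≤ |y|}
  have hset : ∀ ε : ℝ, 0 < ε → {y : ℝ | ε ≤ |y|} = Iic (-ε) ∪ Ici ε := by
    intro ε hε
    ext y
    simp only [mem_setOf_eq, mem_union, mem_Iic, mem_Ici, le_abs]
    constructor
    · rintro (h | h)
      · right; exact h
      · left; linarith
    · rintro (h | h)
      · right; linarith
      · left; exact h
  have hInt : ∀ ε : ℝ, 0 < ε → IntegrableOn g {y : ℝ | ε ≤ |y|} := by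
    intro ε hε
    rw [hset ε hε, integrableOn_union]
    constructor
    · rw [← (Measure.measurePreserving_neg (volume : Measure ℝ)).integrableOn_comp_preimage
        (Homeomorph.neg ℝ).measurableEmbedding]
      simp only [Function.comp_def, neg_preimage, neg_Iic, neg_neg]
      have heq : (fun y => g (-y)) = fun y => (M - v (x₀ + -y)) / y ^ 2 := by
        funext y; simp [hg, neg_sq]
      rw [heq]
      exact aux_int_Ici (w := fun y => M - v (x₀ + -y))
        (continuous_const.sub (hvc.comp (continuous_const.add continuous_neg)))
        (fun y => hB (-y)) hε
    · exact aux_int_Ici (w := fun y => M - v (x₀ + y))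
        (continuous_const.sub (hvc.comp (continuous_const.add continuous_id))) hB hε
  -- I(ε) ≥ 0
  have hI_nonneg : ∀ ε : ℝ, ε ∈ Ioi (0:ℝ) →
      0 ≤ (1/π) * ∫ y in {y : ℝ | ε ≤ |y|}, (M - v (x₀ + y)) / y^2 := by
    intro ε hε
    apply mul_nonneg (by positivity)
    exact setIntegral_nonneg (by
      rw [hset ε hε]
      exact (measurableSet_Iic.union measurableSet_Ici)) (fun y _ => hg_nonneg y)
  have hL0 : 0 ≤ L := ge_of_tendsto hL (eventually_nhdsWithin_of_forall hI_nonneg)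
  -- main lower bound
  set δ : ℝ := 2/π with hδdef
  have hδ : 0 < δ := by positivity
  have hVnn : 0 ≤ V := by
    have h1 := hmn.2 hMx.1
    linarith [hV]
  have hub : ∀ a b : ℝ, u b - u a ≤ V := by
    intro a b
    have h1 := hMx.2 ⟨b, rfl⟩
    have h2 := hmn.2 ⟨a, rfl⟩
    rw [hV]; linarith
  have key : ∀ ε : ℝ, ε ∈ Ioo 0 δ →
      (1/π) * ((2*(δ-ε)*M - 2*V)/δ^2)
        ≤ (1/π) * ∫ y in {y : ℝ | ε ≤ |y|}, (M - v (x₀ + y)) / y^2 := by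
    intro ε hε
    obtain ⟨hε0, hεδ⟩ := hε
    have hεδ' : ε ≤ δ := hεδ.le
    gcongr (1/π) * ?_
    have hsub : Icc (-δ) (-ε) ∪ Icc ε δ ⊆ {y : ℝ | ε ≤ |y|} := by
      rintro y (hy | hy) <;> simp only [mem_Icc, mem_setOf_eq] at *
      · rw [le_abs]; right; linarith [hy.1, hy.2]
      · rw [le_abs]; left; exact hy.1
    have hIntε := hInt ε hε0
    have step1 : ∫ y in Icc (-δ) (-ε) ∪ Icc ε δ, g y
        ≤ ∫ y in {y : ℝ | ε ≤ |y|}, g y := by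
      apply setIntegral_mono_set hIntε
      · exact Filter.Eventually.of_forall fun y => hg_nonneg y
      · exact HasSubset.Subset.eventuallyLE hsub
    have hIA : IntegrableOn g (Icc (-δ) (-ε)) :=
      hIntε.mono_set (fun y hy => hsub (Or.inl hy))
    have hIB : IntegrableOn g (Icc ε δ) :=
      hIntε.mono_set (fun y hy => hsub (Or.inr hy))
    have hdisj : Disjoint (Icc (-δ) (-ε)) (Icc ε δ) := by
      apply Set.disjoint_left.2
      rintro y ⟨_, h2⟩ ⟨h3, _⟩
      linarith
    have step2 : ∫ y in Icc (-δ) (-ε) ∪ Icc ε δ, g y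
        = (∫ y in Icc (-δ) (-ε), g y) + ∫ y in Icc ε δ, g y :=
      setIntegral_union hdisj measurableSet_Icc hIA hIB
    have hcont : Continuous fun y : ℝ => (M - v (x₀ + y)) / δ^2 :=
      (continuous_const.sub (hvc.comp (continuous_const.add continuous_id))).div_const _
    have hptA : ∀ y ∈ Icc (-δ) (-ε), (M - v (x₀ + y)) / δ^2 ≤ g y := by
      rintro y ⟨h1, h2⟩
      have hy0 : y ≠ 0 := by intro h; rw [h] at h2; linarith
      have hy2 : 0 < y^2 := pow_two_pos_of_ne_zero hy0
      have hyδ : y^2 ≤ δ^2 := sq_le_sq' h1 (by linarith)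
      exact div_le_div_of_nonneg_left (sub_nonneg.2 (hmax _)) hy2 hyδ
    have hptB : ∀ y ∈ Icc ε δ, (M - v (x₀ + y)) / δ^2 ≤ g y := by
      rintro y ⟨h1, h2⟩
      have hy0 : y ≠ 0 := by intro h; rw [h] at h1; linarith
      have hy2 : 0 < y^2 := pow_two_pos_of_ne_zero hy0
      have hyδ : y^2 ≤ δ^2 := sq_le_sq' (by linarith) h2
      exact div_le_div_of_nonneg_left (sub_nonneg.2 (hmax _)) hy2 hyδ
    have stepA : ((-ε - -δ) * M - (u (x₀ + -ε) - u (x₀ + -δ))) / δ^2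
        ≤ ∫ y in Icc (-δ) (-ε), g y := by
      rw [← aux_integral_helper u hu x₀ M (δ^2) (-δ) (-ε) (by linarith)]
      exact setIntegral_mono_on (hcont.integrableOn_Icc) hIA measurableSet_Icc hptA
    have stepB : ((δ - ε) * M - (u (x₀ + δ) - u (x₀ + ε))) / δ^2
        ≤ ∫ y in Icc ε δ, g y := by
      rw [← aux_integral_helper u hu x₀ M (δ^2) ε δ hεδ']
      exact setIntegral_mono_on (hcont.integrableOn_Icc) hIB measurableSet_Icc hptB
    have hubA : u (x₀ + -ε) - u (x₀ + -δ) ≤ V := hub _ _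
    have hubB : u (x₀ + δ) - u (x₀ + ε) ≤ V := hub _ _
    have hδ2 : 0 < δ^2 := by positivity
    calc (2*(δ-ε)*M - 2*V)/δ^2
        = ((-ε - -δ) * M - V) / δ^2 + ((δ - ε) * M - V) / δ^2 := by ring
      _ ≤ (∫ y in Icc (-δ) (-ε), g y) + ∫ y in Icc ε δ, g y := by
          apply add_le_add
          · refine le_trans ?_ stepA
            gcongr
          · refine le_trans ?_ stepB
            gcongr
      _ = ∫ y in Icc (-δ) (-ε) ∪ Icc ε δ, g y := step2.symm
      _ ≤ _ := step1
  -- limit of lower bound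
  have hφ : Tendsto (fun ε : ℝ => (1/π) * ((2*(δ-ε)*M - 2*V)/δ^2)) (𝓝[>] 0)
      (𝓝 ((1/π) * ((2*δ*M - 2*V)/δ^2))) := by
    have : ContinuousAt (fun ε : ℝ => (1/π) * ((2*(δ-ε)*M - 2*V)/δ^2)) 0 := by
      fun_prop
    simpa using this.continuousWithinAt.tendsto
  have hLc : (1/π) * ((2*δ*M - 2*V)/δ^2) ≤ L := by
    refine le_of_tendsto_of_tendsto hφ hL ?_
    filter_upwards [Ioo_mem_nhdsGT_of_mem ⟨le_refl (0:ℝ), hδ⟩] with ε hε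
    exact key ε hε
  have hval : (1/π) * ((2*δ*M - 2*V)/δ^2) = M - π*V/2 := by
    rw [hδdef]
    field_simp
  rw [hval] at hLc
  rw [ge_iff_le, max_le_iff]
  constructor
  · nlinarith
  · exact hL0
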